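/- Let H be a Hilbert space and let μ̂ = (1/n)∑_{i=1}^n Y_i where Y_1,…,Y_n are i.i.d. H-valued random variables with mean μ and E‖Y_1‖² < ∞. Set λ = c n^{−β} with c > 0 and β > 1, and define μ̌_λ = μ̂/(1+λ). If ‖μ‖² < A·E‖Y_1‖² where A = 2^{1/β}β / (2^{1/β}β + c^{1/β}(β−1)^{(β−1)/β}), then for all n ≥ 1, E‖μ̌_λ − μ‖² < E‖μ̂ − μ‖². -/

import Mathlib

open MeasureTheory ProbabilityTheory

lemma aux_bern {β s t : ℝ} (hβ : 1 ≤ β) (hs : 0 < s) (ht : 0 < t) :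
    β * s ^ (β - 1) * t ≤ t ^ β + (β - 1) * s ^ β := by
  have hu : (0:ℝ) < t / s := div_pos ht hs
  have h := one_add_mul_self_le_rpow_one_add (s := t / s - 1) (by linarith) hβ
  rw [show (1:ℝ) + (t / s - 1) = t / s by ring] at h
  have hds : (t / s) ^ β = t ^ β / s ^ β := Real.div_rpow ht.le hs.le β
  rw [hds] at h
  have hsp : (0:ℝ) < s ^ β := Real.rpow_pos_of_pos hs β
  have hkey : s ^ (β - 1) * s = s ^ β := by
    nth_rewrite 2 [← Real.rpow_one s]
    rw [← Real.rpow_add hs]; ring_nf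
  rw [le_div_iff₀ hsp] at h
  have ht' : β * (t/s) * s ^ β = β * s ^ (β-1) * t := by
    field_simp; rw [← hkey]; ring
  nlinarith [h, ht']

lemma aux_key {c β : ℝ} (hc : 0 < c) (hβ : 1 < β) (n : ℕ) (hn : 0 < n) :
    2 ^ (1/β) * β * (c * (n:ℝ)) ≤
      c ^ (1/β) * (β-1) ^ ((β-1)/β) * (2 * (n:ℝ) ^ β + c) := by
  have hβ0 : (0:ℝ) < β := by linarith
  have hβ1 : (0:ℝ) < β - 1 := by linarith
  have hx : (0:ℝ) < c / (2*(β-1)) := by positivity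
  set s : ℝ := (c / (2*(β-1))) ^ (1/β) with hs_def
  have hspos : 0 < s := Real.rpow_pos_of_pos hx _
  have hsβ : s ^ β = c / (2*(β-1)) := by
    rw [hs_def, ← Real.rpow_mul hx.le, one_div_mul_cancel (ne_of_gt hβ0), Real.rpow_one]
  have hc2 : c = 2*(β-1)*s^β := by rw [hsβ]; field_simp
  have hsq : s * s^(β-1) = s^β := by
    nth_rewrite 1 [← Real.rpow_one s]
    rw [← Real.rpow_add hspos]; ring_nf
  have h2pos : (0:ℝ) < (2:ℝ) ^ (1/β) := Real.rpow_pos_of_pos (by norm_num) _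
  have hb1pos : (0:ℝ) < (β-1) ^ (1/β) := Real.rpow_pos_of_pos hβ1 _
  have hC : c ^ (1/β) * (β-1) ^ ((β-1)/β) = 2^(1/β) * β * s * (β-1) / β := by
    have h1 : s = c^(1/β) / (2^(1/β) * (β-1)^(1/β)) := by
      rw [hs_def, Real.div_rpow hc.le (by positivity), Real.mul_rpow (by norm_num) hβ1.le]
    have h2 : (β-1) ^ ((β-1)/β) = (β-1) / (β-1)^(1/β) := by
      rw [show (β-1)/β = 1 - 1/β by field_simp, Real.rpow_sub hβ1, Real.rpow_one]
    rw [h1, h2]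
    field_simp
  have hnpos : (0:ℝ) < (n:ℝ) := by exact_mod_cast hn
  have hb := aux_bern hβ.le hspos hnpos
  have hsβpos : (0:ℝ) < s ^ β := Real.rpow_pos_of_pos hspos _
  have hnβpos : (0:ℝ) < (n:ℝ) ^ β := Real.rpow_pos_of_pos hnpos _
  have hb2 : β * s^β * (n:ℝ) ≤ s * ((n:ℝ)^β + (β-1)*s^β) := by
    calc β * s^β * (n:ℝ) = s * (β * s^(β-1) * (n:ℝ)) := by rw [← hsq]; ring
    _ ≤ s * ((n:ℝ)^β + (β-1)*s^β) := mul_le_mul_of_nonneg_left hb hspos.le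
  rw [hC, div_mul_eq_mul_div, le_div_iff₀ hβ0, hc2]
  nlinarith [mul_le_mul_of_nonneg_left hb2 (by positivity : (0:ℝ) ≤ 2*(β-1)*(2^(1/β))*β)]

open scoped RealInnerProductSpace in
lemma indep_integral_inner {H Ω : Type*} [NormedAddCommGroup H] [InnerProductSpace ℝ H]
    [CompleteSpace H] [MeasurableSpace H] [BorelSpace H] [SecondCountableTopology H]
    [MeasurableSpace Ω] {P : Measure Ω} [IsProbabilityMeasure P]
    {X Z : Ω → H} (hX : Measurable X) (hZ : Measurable Z)
    (hXi : Integrable X P) (hZi : Integrable Z P)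
    (h : IndepFun X Z P) :
    ∫ ω, ⟪X ω, Z ω⟫ ∂P = ⟪∫ ω, X ω ∂P, ∫ ω, Z ω ∂P⟫ := by
  have hmap : P.map (fun ω => (X ω, Z ω)) = (P.map X).prod (P.map Z) :=
    (indepFun_iff_map_prod_eq_prod_map_map hX.aemeasurable hZ.aemeasurable).1 h
  have hPX : IsProbabilityMeasure (P.map X) := Measure.isProbabilityMeasure_map hX.aemeasurable
  have hPZ : IsProbabilityMeasure (P.map Z) := Measure.isProbabilityMeasure_map hZ.aemeasurable
  have hcont : Continuous (fun p : H × H => ⟪p.1, p.2⟫) := continuous_inner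
  have hXn : Integrable (fun x : H => ‖x‖) (P.map X) :=
    (integrable_map_measure measurable_norm.aestronglyMeasurable hX.aemeasurable).2 hXi.norm
  have hZn : Integrable (fun x : H => ‖x‖) (P.map Z) :=
    (integrable_map_measure measurable_norm.aestronglyMeasurable hZ.aemeasurable).2 hZi.norm
  have hprodint : Integrable (fun p : H × H => ⟪p.1, p.2⟫) ((P.map X).prod (P.map Z)) := by
    refine (hXn.mul_prod hZn).mono hcont.aestronglyMeasurable
      (Filter.Eventually.of_forall fun p => ?_)
    simp only [Real.norm_eq_abs]
    rw [abs_of_nonneg (mul_nonneg (norm_nonneg _) (norm_nonneg _))]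
    exact abs_real_inner_le_norm _ _
  have hidZ : Integrable (fun z : H => z) (P.map Z) :=
    (integrable_map_measure aestronglyMeasurable_id hZ.aemeasurable).2 hZi
  have hidX : Integrable (fun z : H => z) (P.map X) :=
    (integrable_map_measure aestronglyMeasurable_id hX.aemeasurable).2 hXi
  have hmz : ∫ z, z ∂(P.map Z) = ∫ ω, Z ω ∂P := integral_map hZ.aemeasurable aestronglyMeasurable_id
  have hmx : ∫ x, x ∂(P.map X) = ∫ ω, X ω ∂P := integral_map hX.aemeasurable aestronglyMeasurable_id
  calc ∫ ω, ⟪X ω, Z ω⟫ ∂P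
      = ∫ p : H × H, ⟪p.1, p.2⟫ ∂((P.map X).prod (P.map Z)) := by
        rw [← hmap, integral_map (hX.prodMk hZ).aemeasurable hcont.aestronglyMeasurable]
    _ = ∫ x, ∫ z, ⟪x, z⟫ ∂(P.map Z) ∂(P.map X) := integral_prod _ hprodint
    _ = ∫ x, ⟪x, ∫ ω, Z ω ∂P⟫ ∂(P.map X) := by
        refine integral_congr_ae (Filter.Eventually.of_forall fun x => ?_)
        dsimp only
        rw [← hmz]
        exact integral_inner hidZ x
    _ = ∫ x, ⟪∫ ω, Z ω ∂P, x⟫ ∂(P.map X) :=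
        integral_congr_ae (Filter.Eventually.of_forall fun x => real_inner_comm _ _)
    _ = ⟪∫ ω, X ω ∂P, ∫ ω, Z ω ∂P⟫ := by
        rw [← hmx, ← real_inner_comm]
        exact integral_inner hidX _

open scoped RealInnerProductSpace

set_option maxHeartbeats 1000000 in
/-- Theorem 1(ii): with `λ = c n^{-β}`, `β > 1`, the shrinkage estimator
`μ̂/(1+λ)` strictly improves on the empirical mean `μ̂` of i.i.d. Hilbert-space
valued variables whenever `‖μ‖² < A · E‖Y₁‖²`. -/
theorem stmt1 {H : Type*} [NormedAddCommGroup H] [InnerProductSpace ℝ H]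
    [CompleteSpace H] [MeasurableSpace H] [BorelSpace H] [SecondCountableTopology H]
    {Ω : Type*} [MeasurableSpace Ω] (P : Measure Ω) [IsProbabilityMeasure P]
    (n : ℕ) (hn : 0 < n) (Y : Fin n → Ω → H)
    (hmeas : ∀ i, Measurable (Y i))
    (hindep : iIndepFun Y P)
    (hident : ∀ i j, IdentDistrib (Y i) (Y j) P P)
    (μ : H) (hmean : ∀ i, ∫ ω, Y i ω ∂P = μ)
    (hL2 : ∀ i, Integrable (fun ω => ‖Y i ω‖ ^ 2) P)
    (c β : ℝ) (hc : 0 < c) (hβ : 1 < β)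
    (lam : ℝ) (hlam : lam = c * (n : ℝ) ^ (-β))
    (A : ℝ)
    (hA : A = 2 ^ (1 / β) * β /
        (2 ^ (1 / β) * β + c ^ (1 / β) * (β - 1) ^ ((β - 1) / β)))
    (i₀ : Fin n)
    (hsmall : ‖μ‖ ^ 2 < A * ∫ ω, ‖Y i₀ ω‖ ^ 2 ∂P) :
    (∫ ω, ‖(1 + lam)⁻¹ • ((n : ℝ)⁻¹ • ∑ i, Y i ω) - μ‖ ^ 2 ∂P)
      < ∫ ω, ‖((n : ℝ)⁻¹ • ∑ i, Y i ω) - μ‖ ^ 2 ∂P := by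
  classical
  have hβ0 : (0:ℝ) < β := by linarith
  have hn0 : (0:ℝ) < (n:ℝ) := by exact_mod_cast hn
  have hlam0 : 0 < lam := by rw [hlam]; positivity
  set a : ℝ := (1 + lam)⁻¹ with ha_def
  have ha0 : 0 < a := by rw [ha_def]; positivity
  have ha1 : a < 1 := by
    rw [ha_def]
    rw [inv_lt_one_iff₀]; right; linarith
  set S : ℝ := ∫ ω, ‖Y i₀ ω‖ ^ 2 ∂P with hS_def
  set M : ℝ := ‖μ‖ ^ 2 with hM_def
  have hM0 : 0 ≤ M := by rw [hM_def]; positivity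
  -- basic integrability
  have hY2 : ∀ i, MemLp (Y i) 2 P := fun i =>
    (memLp_two_iff_integrable_sq_norm (hmeas i).aestronglyMeasurable).2 (hL2 i)
  have hYint : ∀ i, Integrable (Y i) P := fun i => (hY2 i).integrable one_le_two
  set g : Ω → H := fun ω => (n:ℝ)⁻¹ • ∑ i, Y i ω with hg_def
  have hg2 : MemLp g 2 P := by
    have h := (memLp_finset_sum' Finset.univ (fun i _ => hY2 i)).const_smul ((n:ℝ)⁻¹)
    have heq : g = ((n:ℝ)⁻¹ • ∑ i, Y i) := by
      funext ω; simp [hg_def, Finset.sum_apply]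
    rw [heq]; exact h
  show (∫ ω, ‖a • g ω - μ‖ ^ 2 ∂P) < ∫ ω, ‖g ω - μ‖ ^ 2 ∂P
  clear_value a S M g
  have hgint : Integrable g P := hg2.integrable one_le_two
  have hgmean : ∫ ω, g ω ∂P = μ := by
    rw [hg_def]
    rw [integral_smul, integral_finset_sum _ (fun i _ => hYint i)]
    simp only [hmean, Finset.sum_const, Finset.card_univ, Fintype.card_fin]
    rw [← Nat.cast_smul_eq_nsmul ℝ, smul_smul, inv_mul_cancel₀ (ne_of_gt hn0), one_smul]
  have hgnorm2 : Integrable (fun ω => ‖g ω‖^2) P :=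
    (memLp_two_iff_integrable_sq_norm hg2.aestronglyMeasurable).1 hg2
  set T : ℝ := ∫ ω, ‖g ω‖^2 ∂P with hT_def
  have hginner : Integrable (fun ω => ⟪μ, g ω⟫) P := hgint.const_inner μ
  have hip : ∫ ω, ⟪μ, g ω⟫ ∂P = M := by
    rw [integral_inner hgint, hgmean, hM_def, real_inner_self_eq_norm_sq]
  -- expansion
  have hexp : ∀ r : ℝ, ∫ ω, ‖r • g ω - μ‖^2 ∂P = r^2 * T - 2*r*M + M := by
    intro r
    have hpt : ∀ ω, ‖r • g ω - μ‖^2 = r^2*‖g ω‖^2 - 2*r*⟪μ, g ω⟫ + M := by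
      intro ω
      rw [norm_sub_sq_real, norm_smul, mul_pow, real_inner_smul_left,
        real_inner_comm (g ω) μ, Real.norm_eq_abs, sq_abs, hM_def]
      ring
    calc ∫ ω, ‖r • g ω - μ‖^2 ∂P
        = ∫ ω, (r^2*‖g ω‖^2 - 2*r*⟪μ, g ω⟫ + M) ∂P :=
          integral_congr_ae (Filter.Eventually.of_forall hpt)
      _ = r^2 * T - 2*r*M + M := by
          have hint1 : Integrable (fun ω => r^2*‖g ω‖^2 - 2*r*⟪μ, g ω⟫) P :=
            (hgnorm2.const_mul (r^2)).sub (hginner.const_mul (2*r))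
          rw [integral_add hint1 (integrable_const M),
            integral_sub (hgnorm2.const_mul (r^2)) (hginner.const_mul (2*r)),
            integral_const_mul, integral_const_mul, integral_const, hip]
          simp [hT_def]
  -- integrability of inner products
  have hYij : ∀ i j : Fin n, Integrable (fun ω => ⟪Y i ω, Y j ω⟫) P := by
    intro i j
    have hbound : Integrable (fun ω => 1/2*(‖Y i ω‖^2 + ‖Y j ω‖^2)) P := by
      have h := ((hL2 i).add (hL2 j)).const_mul (1/2:ℝ)
      simpa using h
    refine hbound.mono ((hmeas i).inner (hmeas j)).aestronglyMeasurable
      (Filter.Eventually.of_forall fun ω => ?_)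
    simp only [Real.norm_eq_abs]
    rw [abs_of_nonneg (show (0:ℝ) ≤ 1/2*(‖Y i ω‖^2 + ‖Y j ω‖^2) by positivity)]
    nlinarith [abs_real_inner_le_norm (Y i ω) (Y j ω),
      sq_nonneg (‖Y i ω‖ - ‖Y j ω‖), abs_nonneg (⟪Y i ω, Y j ω⟫)]
  have hdiag : ∀ i : Fin n, ∫ ω, ⟪Y i ω, Y i ω⟫ ∂P = S := by
    intro i
    have h1 : (fun ω => ⟪Y i ω, Y i ω⟫) = fun ω => ‖Y i ω‖^2 :=
      funext fun ω => real_inner_self_eq_norm_sq _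
    rw [h1, hS_def]
    exact ((hident i i₀).comp ((measurable_norm).pow_const 2)).integral_eq
  have hoff : ∀ i j : Fin n, i ≠ j → ∫ ω, ⟪Y i ω, Y j ω⟫ ∂P = M := by
    intro i j hij
    rw [indep_integral_inner (hmeas i) (hmeas j) (hYint i) (hYint j)
        (hindep.indepFun hij), hmean, hmean, hM_def, real_inner_self_eq_norm_sq]
  -- value of T
  have hbig : ∫ ω, ‖∑ i, Y i ω‖^2 ∂P = ∑ i, ∑ j, ∫ ω, ⟪Y i ω, Y j ω⟫ ∂P := by
    have hpt : ∀ ω, ‖∑ i, Y i ω‖^2 = ∑ i, ∑ j, ⟪Y i ω, Y j ω⟫ := by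
      intro ω
      rw [← real_inner_self_eq_norm_sq]
      simp_rw [sum_inner, inner_sum]
    simp_rw [hpt]
    rw [integral_finset_sum _ (fun i _ => integrable_finset_sum _ (fun j _ => hYij i j))]
    exact Finset.sum_congr rfl fun i _ => integral_finset_sum _ fun j _ => hYij i j
  have hsum_eval : ∑ i : Fin n, ∑ j : Fin n, ∫ ω, ⟪Y i ω, Y j ω⟫ ∂P
      = (n:ℝ)*S + ((n:ℝ)^2 - (n:ℝ))*M := by
    have hrow : ∀ i : Fin n, ∑ j : Fin n, ∫ ω, ⟪Y i ω, Y j ω⟫ ∂P = S + ((n:ℝ)-1)*M := by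
      intro i
      have h1 : ∀ j : Fin n, ∫ ω, ⟪Y i ω, Y j ω⟫ ∂P = M + (if j = i then S - M else 0) := by
        intro j
        by_cases h : j = i
        · rw [h, hdiag i]; simp
        · simp [h, hoff i j (fun hh => h hh.symm)]
      simp_rw [h1]
      rw [Finset.sum_add_distrib, Finset.sum_const, Finset.sum_ite_eq' Finset.univ i
        (fun _ => S - M)]
      simp only [Finset.card_univ, Fintype.card_fin, Finset.mem_univ, if_true, nsmul_eq_mul]
      ring
    simp_rw [hrow]
    rw [Finset.sum_const, Finset.card_univ, Fintype.card_fin, nsmul_eq_mul]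
    ring
  have hTn : (n:ℝ) * T = S + ((n:ℝ)-1)*M := by
    have hptg : ∀ ω, ‖g ω‖^2 = ((n:ℝ)⁻¹)^2 * ‖∑ i, Y i ω‖^2 := by
      intro ω
      rw [hg_def]
      rw [norm_smul, mul_pow, Real.norm_eq_abs, sq_abs]
    have hTval : T = ((n:ℝ)⁻¹)^2 * ((n:ℝ)*S + ((n:ℝ)^2 - (n:ℝ))*M) := by
      rw [hT_def]
      calc ∫ ω, ‖g ω‖^2 ∂P = ∫ ω, ((n:ℝ)⁻¹)^2 * ‖∑ i, Y i ω‖^2 ∂P :=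
            integral_congr_ae (Filter.Eventually.of_forall hptg)
        _ = ((n:ℝ)⁻¹)^2 * ∫ ω, ‖∑ i, Y i ω‖^2 ∂P := integral_const_mul _ _
        _ = ((n:ℝ)⁻¹)^2 * ((n:ℝ)*S + ((n:ℝ)^2 - (n:ℝ))*M) := by rw [hbig, hsum_eval]
    rw [hTval]
    field_simp
  -- constants
  set Bv : ℝ := 2 ^ (1/β) * β with hBv
  set Cv : ℝ := c ^ (1/β) * (β-1) ^ ((β-1)/β) with hCv
  clear_value Bv Cv
  have hBpos : 0 < Bv := by
    rw [hBv]; positivity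
  
  have hCpos : 0 < Cv := by
    have h1 : (0:ℝ) < c ^ (1/β) := Real.rpow_pos_of_pos hc _
    have h2 : (0:ℝ) < (β-1) ^ ((β-1)/β) := Real.rpow_pos_of_pos (by linarith) _
    rw [hCv]; positivity
  have hApos : 0 < A := by rw [hA]; positivity
  have hS0 : 0 < S := by
    by_contra h
    push_neg at h
    nlinarith [mul_nonpos_of_nonneg_of_nonpos hApos.le h]
  have hkey : A * (2 + ((n:ℝ)+1) * lam) ≤ 2 + lam := by
    have h0 := aux_key hc hβ n hn
    rw [← hBv, ← hCv] at h0
    have hnb : (0:ℝ) < (n:ℝ)^(-β) := Real.rpow_pos_of_pos hn0 _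
    have hcancel : (n:ℝ)^β * (n:ℝ)^(-β) = 1 := by
      rw [← Real.rpow_add hn0]; simp
    have e1 : Bv * ((n:ℝ) * lam) = Bv * (c * (n:ℝ)) * (n:ℝ)^(-β) := by rw [hlam]; ring
    have e2 : Cv * (2*(n:ℝ)^β + c) * (n:ℝ)^(-β) = Cv * (2 + lam) := by
      rw [hlam]
      linear_combination (2*Cv) * hcancel
    have h1 : Bv * ((n:ℝ) * lam) ≤ Cv * (2 + lam) := by
      rw [e1, ← e2]
      exact mul_le_mul_of_nonneg_right h0 hnb.le
    rw [hA, div_mul_eq_mul_div, div_le_iff₀ (show (0:ℝ) < Bv + Cv by linarith)]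
    nlinarith [h1]
  -- final arithmetic
  have h2 : (2 + ((n:ℝ)+1)*lam)*M < (2+lam)*S := by
    calc (2 + ((n:ℝ)+1)*lam)*M < (2 + ((n:ℝ)+1)*lam)*(A*S) := by
          apply mul_lt_mul_of_pos_left hsmall
          positivity
      _ = (A * (2 + ((n:ℝ)+1)*lam))*S := by ring
      _ ≤ (2+lam)*S := mul_le_mul_of_nonneg_right hkey hS0.le
  have key2 : 2*(n:ℝ)*(1+lam)*M < (2+lam)*(S + ((n:ℝ)-1)*M) := by nlinarith [h2, hM0, hlam0]
  have e : (1 + a)*(1+lam) = 2 + lam := by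
    rw [ha_def]
    field_simp
    ring
  have h3 : 2*M < (1+a)*T := by
    rw [← mul_lt_mul_iff_left₀ (show (0:ℝ) < (1+lam)*(n:ℝ) by positivity)]
    calc 2*M*((1+lam)*(n:ℝ)) = 2*(n:ℝ)*(1+lam)*M := by ring
      _ < (2+lam)*(S + ((n:ℝ)-1)*M) := key2
      _ = ((1+a)*(1+lam))*((n:ℝ)*T) := by rw [e, hTn]
      _ = (1+a)*T*((1+lam)*(n:ℝ)) := by ring
  have hG : (∫ ω, ‖a • g ω - μ‖^2 ∂P) < ∫ ω, ‖g ω - μ‖^2 ∂P := by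
    rw [hexp a]
    have h1 := hexp 1
    simp only [one_smul, one_pow, one_mul, mul_one] at h1
    rw [h1]
    nlinarith [mul_pos (show (0:ℝ) < 1 - a by linarith) (show (0:ℝ) < (1+a)*T - 2*M by linarith)]
  exact hG
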